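/- arXiv:1004.1823 — 6 statements merged into one kernel-verified Lean document; each statement's English description precedes it below -/
import Mathlib

section
/- Let X be a nonempty subset of the cluster T_r and let m(X) denote the mean of the points {A_i : i ∈ X}. Then |m(X) − μ_r| ≤ ‖A−C‖ / √|X|. -/
open scoped BigOperators RealInnerProductSpace

noncomputable section

/-- Points of `ℝ^d` with the Euclidean norm. -/
abbrev Pt (d : ℕ) := EuclideanSpace ℝ (Fin d)

/-- The spectral (operator) norm of a real `n × d` matrix, viewed as a linear map
between Euclidean spaces. -/
def specNorm {n d : ℕ} (M : Matrix (Fin n) (Fin d) ℝ) : ℝ :=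
  ‖LinearMap.toContinuousLinearMap (Matrix.toEuclideanLin M)‖

/-- The `n × d` matrix whose `i`-th row is `p i - q i`. -/
def diffM {n d : ℕ} (p q : Fin n → Pt d) : Matrix (Fin n) (Fin d) ℝ :=
  Matrix.of fun i j => p i j - q i j

/-- The mean of the points `p i`, `i ∈ X`. -/
def fmean {n d : ℕ} (p : Fin n → Pt d) (X : Finset (Fin n)) : Pt d :=
  (X.card : ℝ)⁻¹ • ∑ i ∈ X, p i

theorem mean_close_to_cluster_center
    {n d k : ℕ} (A C : Fin n → Pt d) (T : Fin k → Finset (Fin n))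
    (μ : Fin k → Pt d)
    (hpart : ∀ i, ∃! r, i ∈ T r)
    (hμ : ∀ r, μ r = fmean A (T r))
    (hC : ∀ i r, i ∈ T r → C i = μ r)
    (r : Fin k) (X : Finset (Fin n)) (hXsub : X ⊆ T r) (hXne : X.Nonempty) :
    ‖fmean A X - μ r‖ ≤ specNorm (diffM A C) / Real.sqrt X.card := by
  classical
  set M := diffM A C with hM
  set L := LinearMap.toContinuousLinearMap (Matrix.toEuclideanLin M) with hL
  have hcard : (0 : ℝ) < X.card := by exact_mod_cast hXne.card_pos
  have hLnn : (0 : ℝ) ≤ ‖L‖ := norm_nonneg _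
  -- the indicator vector v of X
  set v : EuclideanSpace ℝ (Fin n) :=
    (WithLp.equiv 2 (Fin n → ℝ)).symm (fun i => if i ∈ X then (1 : ℝ) else 0) with hv
  have hvi : ∀ i, v i = if i ∈ X then (1 : ℝ) else 0 := fun i => rfl
  have hvnorm : ‖v‖ = Real.sqrt X.card := by
    rw [EuclideanSpace.norm_eq]
    congr 1
    have : ∀ i : Fin n, ‖v i‖ ^ 2 = if i ∈ X then (1 : ℝ) else 0 := by
      intro i
      rw [hvi]
      by_cases h : i ∈ X <;> simp [h]
    rw [Finset.sum_congr rfl fun i _ => this i, Finset.sum_ite_mem,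
      Finset.univ_inter, Finset.sum_const, nsmul_eq_mul, mul_one]
  -- w = sum over X of (A i - C i)
  set w : Pt d := ∑ i ∈ X, (A i - C i) with hw
  have hLu : ∀ (u : Pt d) (i : Fin n), (L u) i = ∑ j, M i j * u j := fun u i => rfl
  -- key: ⟪w, u⟫ ≤ √|X| ‖L‖ ‖u‖
  have key : ∀ u : Pt d, (inner ℝ w u : ℝ) ≤ Real.sqrt X.card * (‖L‖ * ‖u‖) := by
    intro u
    have h1 : (inner ℝ w u : ℝ) = (inner ℝ v (L u) : ℝ) := by
      rw [hw, sum_inner, PiLp.inner_apply]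
      have hterm : ∀ i : Fin n, (inner ℝ (v i) ((L u) i) : ℝ) = if i ∈ X then (L u) i else 0 := by
        intro i
        rw [hvi]
        by_cases h : i ∈ X <;> simp [h]
      rw [Finset.sum_congr rfl fun i _ => hterm i, Finset.sum_ite_mem, Finset.univ_inter]
      refine Finset.sum_congr rfl fun i _ => ?_
      rw [hLu, PiLp.inner_apply]
      refine Finset.sum_congr rfl fun j _ => ?_
      simp [hM, diffM, mul_comm]
    calc (inner ℝ w u : ℝ) = (inner ℝ v (L u) : ℝ) := h1
      _ ≤ ‖v‖ * ‖L u‖ := real_inner_le_norm _ _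
      _ ≤ ‖v‖ * (‖L‖ * ‖u‖) := by
          exact mul_le_mul_of_nonneg_left (L.le_opNorm u) (norm_nonneg v)
      _ = Real.sqrt X.card * (‖L‖ * ‖u‖) := by rw [hvnorm]
  -- hence ‖w‖ ≤ √|X| ‖L‖
  have hwle : ‖w‖ ≤ Real.sqrt X.card * ‖L‖ := by
    rcases eq_or_lt_of_le (norm_nonneg w) with h0 | h0
    · rw [← h0]
      exact mul_nonneg (Real.sqrt_nonneg _) hLnn
    · have := key w
      rw [real_inner_self_eq_norm_mul_norm] at this
      have h2 : ‖w‖ * ‖w‖ ≤ Real.sqrt X.card * ‖L‖ * ‖w‖ := by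
        linarith [this]
      exact le_of_mul_le_mul_right h2 h0
  -- fmean A X - μ r = card⁻¹ • w
  have hdiff : fmean A X - μ r = (X.card : ℝ)⁻¹ • w := by
    have hCsum : ∑ i ∈ X, C i = (X.card : ℝ) • μ r := by
      rw [Finset.sum_congr rfl fun i hi => hC i r (hXsub hi)]
      simp [Finset.sum_const, Nat.cast_smul_eq_nsmul ℝ]
    rw [hw, Finset.sum_sub_distrib, smul_sub, hCsum, smul_smul,
      inv_mul_cancel₀ (ne_of_gt hcard), one_smul, fmean]
  rw [hdiff]
  rw [norm_smul, Real.norm_eq_abs, abs_of_pos (inv_pos.mpr hcard)]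
  have hs0 : Real.sqrt X.card ≠ 0 := by positivity
  have hsqrt : (X.card : ℝ)⁻¹ * Real.sqrt X.card = (Real.sqrt X.card)⁻¹ := by
    field_simp
    exact Real.sq_sqrt hcard.le
  calc (X.card : ℝ)⁻¹ * ‖w‖ ≤ (X.card : ℝ)⁻¹ * (Real.sqrt X.card * ‖L‖) := by
        exact mul_le_mul_of_nonneg_left hwle (inv_nonneg.mpr (le_of_lt hcard))
    _ = specNorm M / Real.sqrt X.card := by
        rw [← mul_assoc, hsqrt, specNorm, ← hL, div_eq_inv_mul, mul_comm]
end
end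

section
/- Let μ_r, μ_s, ν_r, ν_s, x ∈ ℝ^d with μ_r ≠ μ_s, let Δ > 0 with Δ ≤ |μ_r − μ_s|, and set δ = |ν_r − μ_r| + |ν_s − μ_s|, assuming 0 < δ ≤ Δ/16. Suppose that (i) the orthogonal projection x̂ of x onto the line through μ_r and μ_s satisfies |x̂ − μ_s| − |x̂ − μ_r| ≥ Δ (i.e., x̂ is at least Δ closer to μ_r than to μ_s), and (ii) x is at least as close to ν_s as to ν_r, i.e., |x − ν_s| ≤ |x − ν_r|. Then |x − μ_r| ≥ Δ·|μ_r − μ_s| / (64·δ). -/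
open scoped BigOperators

noncomputable section

/-- The orthogonal projection of `x` onto the line through `a` and `b`. -/
def lineProj {d : ℕ} (a b x : Pt d) : Pt d :=
  a + ((inner ℝ (x - a) (b - a) : ℝ) / ‖b - a‖ ^ 2) • (b - a)

theorem misclassified_point_far_from_center
    {d : ℕ} (μr μs νr νs x : Pt d) (Δ : ℝ)
    (hne : μr ≠ μs) (hΔpos : 0 < Δ) (hΔle : Δ ≤ ‖μr - μs‖)
    (hδpos : 0 < ‖νr - μr‖ + ‖νs - μs‖)
    (hδle : ‖νr - μr‖ + ‖νs - μs‖ ≤ Δ / 16)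
    (hprox : ‖lineProj μr μs x - μs‖ - ‖lineProj μr μs x - μr‖ ≥ Δ)
    (hassign : ‖x - νs‖ ≤ ‖x - νr‖) :
    ‖x - μr‖ ≥ Δ * ‖μr - μs‖ / (64 * (‖νr - μr‖ + ‖νs - μs‖)) := by

  classical
  set δ := ‖νr - μr‖ + ‖νs - μs‖ with hδdef
  set v := μs - μr with hv
  have hv0 : v ≠ 0 := sub_ne_zero.mpr (Ne.symm hne)
  have hnv : 0 < ‖v‖ := norm_pos_iff.mpr hv0
  have hnorm_eq : ‖μr - μs‖ = ‖v‖ := by rw [hv, norm_sub_rev]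
  set m := (1/2 : ℝ) • (μr + μs) with hm
  set xh := lineProj μr μs x with hxh
  -- perpendicularity
  have hperp : (inner ℝ (x - xh) v : ℝ) = 0 := by
    rw [hxh, lineProj, ← hv]
    have : x - (μr + ((inner ℝ (x - μr) v : ℝ) / ‖v‖ ^ 2) • v)
        = (x - μr) - ((inner ℝ (x - μr) v : ℝ) / ‖v‖ ^ 2) • v := by abel
    rw [this, inner_sub_left, real_inner_smul_left, real_inner_self_eq_norm_sq]
    field_simp
    simp
  -- inner with x - m equals inner with xh - m
  have hproj : (inner ℝ (x - m) v : ℝ) = inner ℝ (xh - m) v := by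
    have : x - m = (x - xh) + (xh - m) := by abel
    rw [this, inner_add_left, hperp, zero_add]
  -- polarization identity for xh
  have hB1 : ‖xh - μr‖ ^ 2 - ‖xh - μs‖ ^ 2 = 2 * (inner ℝ (xh - m) v : ℝ) := by
    rw [hm, hv]
    simp only [norm_sub_sq_real, inner_sub_left, inner_sub_right, inner_smul_left,
      inner_add_left, inner_add_right, real_inner_self_eq_norm_sq,
      RCLike.star_def, starRingEnd_apply, star_trivial]
    rw [real_inner_comm μr xh, real_inner_comm μs xh, real_inner_comm μs μr]
    ring
  -- lower bound
  have hsum : ‖v‖ ≤ ‖xh - μr‖ + ‖xh - μs‖ := by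
    have : v = (xh - μr) - (xh - μs) := by rw [hv]; abel
    rw [this]
    exact norm_sub_le _ _
  have hP1 : Δ * ‖v‖ ≤ -(2 * (inner ℝ (x - m) v : ℝ)) := by
    rw [hproj, ← hB1]
    nlinarith [norm_nonneg (xh - μr), norm_nonneg (xh - μs), hprox, hsum, hΔpos, hnv]
  -- the assignment condition
  set er := νr - μr with her
  set es := νs - μs with hes
  have hνr : νr = μr + er := by rw [her]; abel
  have hνs : νs = μs + es := by rw [hes]; abel
  have hA : (inner ℝ ((2:ℝ) • x - νr - νs) (νr - νs) : ℝ) ≤ 0 := by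
    have h2 : ‖x - νs‖ ^ 2 ≤ ‖x - νr‖ ^ 2 := by
      apply pow_le_pow_left₀ (norm_nonneg _) hassign
    simp only [norm_sub_sq_real] at h2
    simp only [inner_sub_left, inner_sub_right, inner_smul_left,
      real_inner_self_eq_norm_sq, RCLike.star_def, starRingEnd_apply, star_trivial]
    linarith [h2, real_inner_comm x νr, real_inner_comm x νs, real_inner_comm νr νs,
      real_inner_comm νs νr]
  -- rewrite hA in terms of m, er, es
  have hA2 : 2 * (inner ℝ (x - m) (-v) : ℝ)
      ≤ 2 * (inner ℝ (x - m) (es - er) : ℝ) + (inner ℝ (er + es) (-v + (er - es)) : ℝ) := by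
    have h1 : (2:ℝ) • x - νr - νs = (2:ℝ) • (x - m) - (er + es) := by
      rw [hνr, hνs, hm]; module
    have h2 : νr - νs = -v + (er - es) := by rw [hνr, hνs, hv]; abel
    rw [h1, h2] at hA
    rw [inner_sub_left, inner_smul_left, inner_add_right] at hA
    simp only [RCLike.star_def, starRingEnd_apply, star_trivial] at hA
    have h4 : (inner ℝ (x - m) (es - er) : ℝ) = -(inner ℝ (x - m) (er - es) : ℝ) := by
      rw [show es - er = -(er - es) by abel, inner_neg_right]
    linarith
  -- Cauchy-Schwarz bounds
  have hCS1 : (inner ℝ (x - m) (es - er) : ℝ) ≤ ‖x - m‖ * δ := by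
    calc (inner ℝ (x - m) (es - er) : ℝ) ≤ ‖x - m‖ * ‖es - er‖ := real_inner_le_norm _ _
    _ ≤ ‖x - m‖ * δ := by
        apply mul_le_mul_of_nonneg_left _ (norm_nonneg _)
        calc ‖es - er‖ ≤ ‖es‖ + ‖er‖ := norm_sub_le _ _
        _ = δ := by rw [hδdef, her, hes]; ring
  have hCS2 : (inner ℝ (er + es) (-v + (er - es)) : ℝ) ≤ δ * (‖v‖ + δ) := by
    have hδ' : ‖er‖ + ‖es‖ = δ := by rw [hδdef, her, hes]
    calc (inner ℝ (er + es) (-v + (er - es)) : ℝ) ≤ ‖er + es‖ * ‖-v + (er - es)‖ :=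
        real_inner_le_norm _ _
    _ ≤ δ * (‖v‖ + δ) := by
        apply mul_le_mul _ _ (norm_nonneg _) (le_of_lt hδpos)
        · calc ‖er + es‖ ≤ ‖er‖ + ‖es‖ := norm_add_le _ _
          _ = δ := hδ'
        · calc ‖-v + (er - es)‖ ≤ ‖-v‖ + ‖er - es‖ := norm_add_le _ _
          _ ≤ ‖v‖ + (‖er‖ + ‖es‖) := by
              rw [norm_neg]
              linarith [norm_sub_le er es]
          _ = ‖v‖ + δ := by rw [hδ']
  have hP2 : (inner ℝ (x - m) (-v) : ℝ) = - (inner ℝ (x - m) v : ℝ) := by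
    rw [inner_neg_right]
  have hmain : Δ * ‖v‖ ≤ 2 * (‖x - m‖ * δ) + δ * (‖v‖ + δ) := by
    linarith [hP1, hA2, hCS1, hCS2, hP2]
  -- distance from x to μr
  have htri : ‖x - m‖ ≤ ‖x - μr‖ + ‖v‖ / 2 := by
    have h1 : x - m = (x - μr) - ((1/2 : ℝ) • v) := by rw [hm, hv]; module
    have h2 : ‖(1/2 : ℝ) • v‖ = ‖v‖ / 2 := by
      rw [norm_smul]; simp; ring
    calc ‖x - m‖ = ‖(x - μr) - ((1/2 : ℝ) • v)‖ := by rw [h1]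
    _ ≤ ‖x - μr‖ + ‖(1/2 : ℝ) • v‖ := norm_sub_le _ _
    _ = ‖x - μr‖ + ‖v‖ / 2 := by rw [h2]
  -- final arithmetic on scalars
  have hΔv : Δ ≤ ‖v‖ := hΔle.trans_eq hnorm_eq
  rw [ge_iff_le, hnorm_eq, div_le_iff₀ (by positivity)]
  generalize hX : ‖x - μr‖ = X at hmain htri ⊢
  generalize hM : ‖x - m‖ = M at hmain htri
  generalize hV : ‖v‖ = V at hmain htri hΔv hnv ⊢
  clear_value δ
  clear * - hmain htri hδle hΔv hδpos hΔpos hnv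
  nlinarith [hmain, htri, hδle, hΔv, hδpos, hΔpos, hnv,
    mul_nonneg (le_of_lt hδpos) (sub_nonneg.mpr hΔv),
    mul_pos hδpos hnv, mul_pos hΔpos hnv]
end
end

section
/- Suppose T_1,…,T_k is an optimal k-means clustering of the rows of A (so Δ_k = ‖A−C‖_F² is the optimal k-means cost with k centers), let Δ_{k−1} be the optimal (k−1)-means cost of the rows of A, and suppose Δ_k ≤ ε·Δ_{k−1} for some 0 < ε ≤ 1/2. Then for all r and all s ≠ r, |μ_r − μ_s|² ≥ ‖A−C‖_F² / (2·ε·n_r). -/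
open scoped BigOperators

noncomputable section

/-- The Frobenius norm of a real matrix. -/
def frobNorm {n d : ℕ} (M : Matrix (Fin n) (Fin d) ℝ) : ℝ :=
  Real.sqrt (∑ i, ∑ j, (M i j) ^ 2)

/-- The `k`-means cost of the points `p i` with centers `ν j`. -/
def kmeansCost {n d k : ℕ} (p : Fin n → Pt d) (ν : Fin k → Pt d) : ℝ :=
  ∑ i, ⨅ j, ‖p i - ν j‖ ^ 2

/-- The optimal `j`-means cost of the points `p i`. -/
def optCost {n d : ℕ} (p : Fin n → Pt d) (j : ℕ) : ℝ :=
  ⨅ ν : Fin j → Pt d, kmeansCost p ν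

lemma kmeansCost_nonneg {n d k : ℕ} (p : Fin n → Pt d) (ν : Fin k → Pt d) :
    0 ≤ kmeansCost p ν := by
  refine Finset.sum_nonneg fun i _ => ?_
  exact Real.iInf_nonneg fun j => by positivity

lemma frobNorm_sq {n d : ℕ} (p q : Fin n → Pt d) :
    frobNorm (diffM p q) ^ 2 = ∑ i, ‖p i - q i‖ ^ 2 := by
  unfold frobNorm diffM
  rw [Real.sq_sqrt (by positivity)]
  refine Finset.sum_congr rfl fun i _ => ?_
  rw [EuclideanSpace.norm_eq, Real.sq_sqrt (by positivity)]
  refine Finset.sum_congr rfl fun j _ => ?_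
  simp [sq_abs]

theorem ORSS_condition_implies_separation
    {n d k : ℕ} (ε : ℝ) (A C : Fin n → Pt d) (T : Fin k → Finset (Fin n))
    (μ : Fin k → Pt d)
    (hpart : ∀ i, ∃! r, i ∈ T r)
    (hμ : ∀ r, μ r = fmean A (T r))
    (hC : ∀ i r, i ∈ T r → C i = μ r)
    (hopt : frobNorm (diffM A C) ^ 2 = optCost A k)
    (hεpos : 0 < ε) (hεle : ε ≤ 1 / 2)
    (hsep : optCost A k ≤ ε * optCost A (k - 1)) :
    ∀ r s, s ≠ r →
      frobNorm (diffM A C) ^ 2 / (2 * ε * (T r).card) ≤ ‖μ r - μ s‖ ^ 2 := by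
  intro r s hsr
  by_cases hcard : (T r).card = 0
  · rw [hcard]
    simp only [Nat.cast_zero, mul_zero, div_zero]
    positivity
  obtain ⟨m, rfl⟩ : ∃ m, k = m + 1 := ⟨k - 1, (Nat.succ_pred_eq_of_pos r.pos).symm⟩
  rcases Nat.eq_zero_or_pos m with rfl | hm
  · have h1 := s.isLt
    have h2 := r.isLt
    exact absurd (Fin.ext (by omega : (s:ℕ) = (r:ℕ))) hsr
  simp only [Nat.add_sub_cancel] at hsep
  set Δ : ℝ := frobNorm (diffM A C) ^ 2 with hΔdef
  have hΔnn : 0 ≤ Δ := by positivity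
  set D : ℝ := ‖μ r - μ s‖ ^ 2 with hDdef
  have hDnn : 0 ≤ D := by positivity
  have hΔsum : Δ = ∑ i, ‖A i - C i‖ ^ 2 := frobNorm_sq A C
  -- the center assignment after merging cluster r into s
  set c : Fin n → Pt d := fun i => if i ∈ T r then μ s else C i with hc
  -- zero-sum property of the mean
  have hzero : ∑ i ∈ T r, (A i - μ r) = 0 := by
    rw [Finset.sum_sub_distrib, Finset.sum_const, hμ r, fmean, ← Nat.cast_smul_eq_nsmul ℝ, smul_smul,
      mul_inv_cancel₀ (by exact_mod_cast hcard), one_smul, sub_self]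
  -- cost of reassigning cluster r to center μ s
  have hswap : ∑ i ∈ T r, ‖A i - μ s‖ ^ 2
      = (∑ i ∈ T r, ‖A i - μ r‖ ^ 2) + (T r).card * D := by
    have expand : ∀ i, i ∈ T r → ‖A i - μ s‖ ^ 2
        = ‖A i - μ r‖ ^ 2 + 2 * (inner ℝ (A i - μ r) (μ r - μ s) : ℝ) + D := by
      intro i _
      have h1 : A i - μ s = (A i - μ r) + (μ r - μ s) := by abel
      rw [h1, norm_add_sq_real]
    rw [Finset.sum_congr rfl expand, Finset.sum_add_distrib, Finset.sum_add_distrib,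
      Finset.sum_const, ← Finset.mul_sum, ← sum_inner, hzero, inner_zero_left]
    norm_num
  -- total cost of the merged assignment
  have hcost : ∑ i, ‖A i - c i‖ ^ 2 = Δ + (T r).card * D := by
    have hdiff : ∑ i, (‖A i - c i‖ ^ 2 - ‖A i - C i‖ ^ 2)
        = ∑ i ∈ T r, (‖A i - μ s‖ ^ 2 - ‖A i - μ r‖ ^ 2) := by
      rw [← Finset.sum_subset (Finset.subset_univ (T r))]
      · refine Finset.sum_congr rfl fun i hi => ?_
        rw [hc]
        simp only [if_pos hi, hC i r hi]
      · intro i _ hi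
        rw [hc]
        simp only [if_neg hi, sub_self]
    have := hdiff
    rw [Finset.sum_sub_distrib, Finset.sum_sub_distrib] at this
    rw [hΔsum]
    have h2 : ∑ i ∈ T r, ‖A i - μ s‖ ^ 2 - ∑ i ∈ T r, ‖A i - μ r‖ ^ 2
        = (T r).card * D := by rw [hswap]; ring
    linarith [this, h2]
  -- the merged assignment gives an upper bound on the (k-1)-means cost
  have hkm1 : optCost A m ≤ Δ + (T r).card * D := by
    have hemb : ∃ j : Fin m, r.succAbove j = s := Fin.exists_succAbove_eq hsr
    obtain ⟨js, hjs⟩ := hemb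
    set ν : Fin m → Pt d := fun j => μ (r.succAbove j) with hν
    have hbdd : ∀ i : Fin n, BddBelow (Set.range fun j => ‖A i - ν j‖ ^ 2) := by
      intro i
      exact ⟨0, by rintro x ⟨j, rfl⟩; positivity⟩
    have h1 : optCost A m ≤ kmeansCost A ν := by
      apply ciInf_le
      exact ⟨0, by rintro x ⟨w, rfl⟩; exact kmeansCost_nonneg A w⟩
    refine h1.trans ?_
    rw [← hcost]
    refine Finset.sum_le_sum fun i _ => ?_
    by_cases hi : i ∈ T r
    · have : (⨅ j, ‖A i - ν j‖ ^ 2) ≤ ‖A i - ν js‖ ^ 2 := ciInf_le (hbdd i) js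
      refine this.trans_eq ?_
      rw [hν]
      simp only [hjs, hc, if_pos hi]
    · obtain ⟨t, ht, -⟩ := hpart i
      have htr : t ≠ r := fun h => hi (h ▸ ht)
      obtain ⟨jt, hjt⟩ := Fin.exists_succAbove_eq htr
      have : (⨅ j, ‖A i - ν j‖ ^ 2) ≤ ‖A i - ν jt‖ ^ 2 := ciInf_le (hbdd i) jt
      refine this.trans_eq ?_
      rw [hν]
      simp only [hjt, hc, if_neg hi, hC i t ht]
  -- combine
  have hchain : Δ ≤ ε * (Δ + (T r).card * D) := by
    calc Δ = optCost A (m + 1) := hopt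
    _ ≤ ε * optCost A m := hsep
    _ ≤ ε * (Δ + (T r).card * D) := by
        exact mul_le_mul_of_nonneg_left hkm1 hεpos.le
  have hnr : (0:ℝ) < (T r).card := by
    exact_mod_cast Nat.pos_of_ne_zero hcard
  rw [div_le_iff₀ (by positivity : (0:ℝ) < 2 * ε * (T r).card)]
  nlinarith [mul_nonneg hΔnn (by linarith : (0:ℝ) ≤ 1/2 - ε),
    mul_nonneg (mul_nonneg hεpos.le hnr.le) hDnn]
end
end

section
/- For every k, every constant c > 0 (used in the definition of Δ_rs), and every w > 0 there exist ε₀ > 0 and a constant c₀ such that the following holds. Suppose T_1,…,T_k is an optimal k-means clustering of the rows of A with n_r ≥ w·n for all r, Δ_k and Δ_{k−1} are the optimal k-means and (k−1)-means costs of the rows of A, and Δ_k ≤ ε·Δ_{k−1} for some 0 < ε ≤ ε₀. Then the number of points A_i that do not satisfy the proximity condition is at most c₀·ε·n. -/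
open scoped BigOperators

noncomputable section

/-- The separation parameter `Δ_{rs} = (ck/√n_r + ck/√n_s)·‖A − C‖`. -/
def Dlt {n d k : ℕ} (c : ℝ) (A C : Fin n → Pt d) (T : Fin k → Finset (Fin n))
    (r s : Fin k) : ℝ :=
  (c * k / Real.sqrt (T r).card + c * k / Real.sqrt (T s).card) * specNorm (diffM A C)

/-- The proximity condition for the point `A i`: for every `s ≠ r`, where `T r` is the
cluster of `i`, the projection of `A i` on the line through `μ r` and `μ s` is at least
`Δ_{rs}` closer to `μ r` than to `μ s`. -/
def ProxPt {n d k : ℕ} (c : ℝ) (A C : Fin n → Pt d) (T : Fin k → Finset (Fin n))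
    (μ : Fin k → Pt d) (i : Fin n) : Prop :=
  ∀ r, i ∈ T r → ∀ s, s ≠ r →
    ‖lineProj (μ r) (μ s) (A i) - μ s‖ - ‖lineProj (μ r) (μ s) (A i) - μ r‖
      ≥ Dlt c A C T r s

-- helper lemmas
lemma norm_sq_pt {d : ℕ} (x : Pt d) : ‖x‖ ^ 2 = ∑ j, x j ^ 2 := by
  rw [EuclideanSpace.norm_eq, Real.sq_sqrt (by positivity)]
  simp [sq_abs]

lemma optCost_nonneg {n d : ℕ} (p : Fin n → Pt d) (j : ℕ) : 0 ≤ optCost p j :=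
  Real.iInf_nonneg fun _ => kmeansCost_nonneg _ _

lemma optCost_le_kmeansCost {n d j : ℕ} (p : Fin n → Pt d) (ν : Fin j → Pt d) :
    optCost p j ≤ kmeansCost p ν :=
  ciInf_le ⟨0, by rintro x ⟨ν', rfl⟩; exact kmeansCost_nonneg _ _⟩ ν

lemma iInf_sq_le {n d k : ℕ} (p : Fin n → Pt d) (ν : Fin k → Pt d) (i : Fin n) (j : Fin k) :
    (⨅ j, ‖p i - ν j‖ ^ 2) ≤ ‖p i - ν j‖ ^ 2 :=
  ciInf_le ⟨0, by rintro x ⟨j', rfl⟩; exact sq_nonneg _⟩ j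

lemma specNorm_nonneg {n d : ℕ} (M : Matrix (Fin n) (Fin d) ℝ) : 0 ≤ specNorm M :=
  norm_nonneg _

lemma frobNorm_nonneg {n d : ℕ} (M : Matrix (Fin n) (Fin d) ℝ) : 0 ≤ frobNorm M :=
  Real.sqrt_nonneg _

lemma specNorm_le_frobNorm {n d : ℕ} (M : Matrix (Fin n) (Fin d) ℝ) :
    specNorm M ≤ frobNorm M := by
  apply ContinuousLinearMap.opNorm_le_bound _ (frobNorm_nonneg M)
  intro x
  rw [LinearMap.coe_toContinuousLinearMap']
  have hx : ∀ {m : ℕ} (v : Pt m), ‖v‖ = Real.sqrt (∑ j, v j ^ 2) := fun v => by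
    rw [EuclideanSpace.norm_eq]; congr 1; simp [sq_abs]
  have happ : ∀ i, (Matrix.toEuclideanLin M x) i = ∑ j, M i j * x j := fun i => rfl
  rw [hx (Matrix.toEuclideanLin M x), hx x, frobNorm,
      ← Real.sqrt_mul (by positivity)]
  apply Real.sqrt_le_sqrt
  rw [Finset.sum_mul]
  apply Finset.sum_le_sum
  intro i _
  rw [happ i]
  exact Finset.sum_mul_sq_le_sq_mul_sq _ _ _

lemma merge_bound {n d k : ℕ} (hk : 2 ≤ k)
    (A C : Fin n → Pt d) (T : Fin k → Finset (Fin n)) (μ : Fin k → Pt d)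
    (hpart : ∀ i, ∃! r, i ∈ T r)
    (hmean : ∀ r, μ r = fmean A (T r))
    (hC : ∀ i r, i ∈ T r → C i = μ r)
    (r s : Fin k) (hsr : s ≠ r) (hTr : (T r).card ≠ 0) :
    optCost A (k - 1) ≤ (∑ i, ‖A i - C i‖ ^ 2) + (T r).card * ‖μ r - μ s‖ ^ 2 := by
  classical
  have h1 : k - 1 + 1 = k := by omega
  set e : Fin (k - 1) → Fin k := fun j => Fin.cast h1 ((Fin.cast h1.symm r).succAbove j) with he
  have hesurj : ∀ t : Fin k, t ≠ r → ∃ j, e j = t := by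
    intro t ht
    have hne : Fin.cast h1.symm t ≠ Fin.cast h1.symm r := by
      intro h
      apply ht
      have h2 := congrArg Fin.val h
      exact Fin.ext h2
    obtain ⟨j, hj⟩ := Fin.exists_succAbove_eq hne
    refine ⟨j, Fin.ext ?_⟩
    simp [he, hj]
  set D : Fin n → Pt d := fun i => if i ∈ T r then μ s else C i with hD
  have hDrange : ∀ i, ∃ j, μ (e j) = D i := by
    intro i
    by_cases hi : i ∈ T r
    · obtain ⟨j, hj⟩ := hesurj s hsr
      exact ⟨j, by rw [hj]; simp [hD, hi]⟩
    · obtain ⟨ri, hri, -⟩ := hpart i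
      have hne : ri ≠ r := fun h => hi (h ▸ hri)
      obtain ⟨j, hj⟩ := hesurj ri hne
      exact ⟨j, by rw [hj, ← hC i ri hri]; simp [hD, hi]⟩
  have step1 : optCost A (k-1) ≤ ∑ i, ‖A i - D i‖^2 := by
    refine (optCost_le_kmeansCost A (fun j => μ (e j))).trans ?_
    apply Finset.sum_le_sum
    intro i _
    obtain ⟨j, hj⟩ := hDrange i
    simpa [hj] using iInf_sq_le A (fun j => μ (e j)) i j
  refine step1.trans (le_of_eq ?_)
  have expand : ∀ i, ‖A i - D i‖^2
      = ‖A i - C i‖^2 + (if i ∈ T r then 2 * (inner ℝ (A i - μ r) (μ r - μ s) : ℝ) + ‖μ r - μ s‖^2 else 0) := by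
    intro i
    by_cases hi : i ∈ T r
    · have h2 : A i - μ s = (A i - μ r) + (μ r - μ s) := by abel
      simp only [hD, if_pos hi]
      rw [h2, norm_add_sq_real, hC i r hi]
      ring
    · simp [hD, hi]
  rw [Finset.sum_congr rfl fun i _ => expand i, Finset.sum_add_distrib]
  congr 1
  rw [Finset.sum_ite_mem, Finset.univ_inter, Finset.sum_add_distrib, Finset.sum_const,
      nsmul_eq_mul, ← Finset.mul_sum, ← sum_inner]
  have hzero : (∑ i ∈ T r, (A i - μ r)) = 0 := by
    rw [Finset.sum_sub_distrib, Finset.sum_const, hmean r, fmean,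
        ← Nat.cast_smul_eq_nsmul ℝ, smul_smul,
        mul_inv_cancel₀ (by exact_mod_cast hTr), one_smul, sub_self]
  rw [hzero, inner_zero_left]
  ring

lemma frob_sq_eq {n d : ℕ} (A C : Fin n → Pt d) :
    frobNorm (diffM A C) ^ 2 = ∑ i, ‖A i - C i‖ ^ 2 := by
  rw [frobNorm, Real.sq_sqrt (by positivity)]
  refine Finset.sum_congr rfl fun i _ => ?_
  rw [norm_sq_pt]
  refine Finset.sum_congr rfl fun j _ => ?_
  simp [diffM]

lemma proj_far {d : ℕ} (a b x : Pt d) (Δ : ℝ) (hΔ0 : 0 ≤ Δ)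
    (hΔ : 2 * Δ ≤ ‖b - a‖)
    (hbad : ‖lineProj a b x - b‖ - ‖lineProj a b x - a‖ < Δ) :
    ‖b - a‖ / 4 ≤ ‖x - a‖ := by
  set u := b - a with hu'
  have hu : 0 < ‖u‖ := by
    rcases eq_or_lt_of_le (norm_nonneg u) with h0 | h0
    · exfalso
      have hba : b = a := by
        have : u = 0 := by rw [← norm_eq_zero, ← h0]
        rwa [hu', sub_eq_zero] at this
      have hP : lineProj a b x = a := by
        simp [lineProj, hba]
      rw [hP, hba] at hbad
      simp only [sub_self, norm_zero] at hbad
      linarith [hbad, hΔ, h0.le]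
    · exact h0
  set t := (inner ℝ (x - a) u : ℝ) / ‖u‖ ^ 2 with ht'
  have hP : lineProj a b x - a = t • u := by
    simp [lineProj, ht', hu']
  have hPb : lineProj a b x - b = (t - 1) • u := by
    have h2 : lineProj a b x - b = (lineProj a b x - a) - u := by rw [hu']; abel
    rw [h2, hP, sub_smul, one_smul]
  rw [hP, hPb, norm_smul, norm_smul, Real.norm_eq_abs, Real.norm_eq_abs] at hbad
  have ht : 1/4 ≤ t := by
    by_contra hlt
    push_neg at hlt
    have h1 : |t - 1| = 1 - t := by rw [abs_of_nonpos (by linarith)]; ring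
    rw [h1] at hbad
    rcases le_or_gt 0 t with h0 | h0
    · rw [abs_of_nonneg h0] at hbad
      nlinarith
    · rw [abs_of_neg h0] at hbad
      nlinarith
  have hinner : (inner ℝ (x - a) u : ℝ) = t * ‖u‖ ^ 2 := by
    rw [ht']; field_simp
  have hcs := real_inner_le_norm (x - a) u
  nlinarith [norm_nonneg (x - a)]

set_option maxHeartbeats 2000000

theorem ORSS_condition_implies_proximity_for_most_points
    (k : ℕ) (c w : ℝ) (hc : 0 < c) (hw : 0 < w) :
    ∃ ε₀ : ℝ, 0 < ε₀ ∧ ∃ c₀ : ℝ,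
    ∀ {n d : ℕ} (ε : ℝ) (A C : Fin n → Pt d) (T : Fin k → Finset (Fin n))
      (μ : Fin k → Pt d),
      (∀ i, ∃! r, i ∈ T r) →
      (∀ r, μ r = fmean A (T r)) →
      (∀ i r, i ∈ T r → C i = μ r) →
      (∀ r, w * n ≤ ((T r).card : ℝ)) →
      frobNorm (diffM A C) ^ 2 = optCost A k →
      0 < ε → ε ≤ ε₀ →
      optCost A k ≤ ε * optCost A (k - 1) →
      (({i : Fin n | ¬ ProxPt c A C T μ i}.ncard : ℝ)) ≤ c₀ * ε * n := by
  by_cases hk2 : 2 ≤ k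
  swap
  · -- k ≤ 1 : proximity is vacuous
    refine ⟨1, one_pos, 1, ?_⟩
    intro n d ε A C T μ hpart hmean hC hcard hfrob hε hεle hopt
    have hss : Subsingleton (Fin k) := by
      have hk01 : k = 0 ∨ k = 1 := by omega
      rcases hk01 with h | h <;> subst h <;> infer_instance
    have hempty : {i : Fin n | ¬ ProxPt c A C T μ i} = ∅ := by
      ext i
      simp only [Set.mem_setOf_eq, Set.mem_empty_iff_false, iff_false, not_not]
      intro r _ s hsr
      exact absurd (Subsingleton.elim s r) hsr
    rw [hempty]
    simp only [Set.ncard_empty, Nat.cast_zero]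
    positivity
  · refine ⟨min (1/2) (1/(1 + 16*c^2*k^2/w)), lt_min (by norm_num) (by positivity), 32, ?_⟩
    intro n d ε A C T μ hpart hmean hC hcard hfrob hε hεle hopt
    classical
    rcases Nat.eq_zero_or_pos n with hn | hn
    · subst hn
      have hempty : {i : Fin 0 | ¬ ProxPt c A C T μ i} = ∅ :=
        Set.eq_empty_of_isEmpty _
      rw [hempty]
      simp
    -- main case
    have hnR : (0:ℝ) < n := by exact_mod_cast hn
    have hfrobsum : frobNorm (diffM A C) ^ 2 = ∑ i, ‖A i - C i‖ ^ 2 := frob_sq_eq A C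
    have hSsum : ∑ i, ‖A i - C i‖ ^ 2 = optCost A k := by rw [← hfrobsum, hfrob]
    have hcpos : ∀ r, (0:ℝ) < ((T r).card : ℝ) := fun r =>
      lt_of_lt_of_le (by positivity) (hcard r)
    have hwn : (0:ℝ) < w * n := by positivity
    have hε2 : ε ≤ 1/2 := le_trans hεle (min_le_left _ _)
    have hεb : ε ≤ 1/(1 + 16*c^2*k^2/w) := le_trans hεle (min_le_right _ _)
    have h1e : 1 + 16*c^2*k^2/w ≤ 1/ε := by
      rw [le_div_iff₀ hε]
      have h0 : (0:ℝ) < 1 + 16*c^2*k^2/w := by positivity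
      calc (1 + 16*c^2*k^2/w) * ε ≤ (1 + 16*c^2*k^2/w) * (1/(1 + 16*c^2*k^2/w)) :=
            mul_le_mul_of_nonneg_left hεb (le_of_lt h0)
        _ = 1 := by field_simp
    have h16 : 16*c^2*k^2/w ≤ 1/ε - 1 := by linarith
    have h1epos : (0:ℝ) < 1/ε - 1 := by
      have h2e : (2:ℝ) ≤ 1/ε := by
        rw [le_div_iff₀ hε]; linarith
      linarith
    rcases eq_or_lt_of_le (optCost_nonneg A k) with hΔ0 | hΔpos
    · -- optCost A k = 0 : A = C, everything satisfies proximity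
      have hS0 : ∑ i, ‖A i - C i‖ ^ 2 = 0 := by rw [hSsum, ← hΔ0]
      have hAC : ∀ i, A i = C i := by
        intro i
        have h := (Finset.sum_eq_zero_iff_of_nonneg
          (fun i _ => sq_nonneg ‖A i - C i‖)).mp hS0 i (Finset.mem_univ i)
        have h2 : ‖A i - C i‖ = 0 := by
          have := norm_nonneg (A i - C i); nlinarith
        exact sub_eq_zero.mp (norm_eq_zero.mp h2)
      have hdiff0 : diffM A C = 0 := by
        ext i j
        have h3 : A i j = C i j := by rw [hAC i]
        simp [diffM, sub_eq_zero]
        exact h3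
      have hspec0 : specNorm (diffM A C) = 0 := by
        rw [hdiff0, specNorm]
        simp
      have hprox : ∀ i, ProxPt c A C T μ i := by
        intro i r hir s hsr
        simp only [Dlt, hspec0, mul_zero]
        have hAi : A i = μ r := by rw [hAC i, hC i r hir]
        have hP : lineProj (μ r) (μ s) (A i) = μ r := by
          rw [hAi, lineProj]
          simp
        rw [hP, sub_self, norm_zero, sub_zero]
        exact norm_nonneg _
      have hempty : {i : Fin n | ¬ ProxPt c A C T μ i} = ∅ := by
        ext i; simp [hprox i]
      rw [hempty]
      simp only [Set.ncard_empty, Nat.cast_zero]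
      positivity
    · -- optCost A k > 0
      set Δk := optCost A k with hΔkdef
      set Δk1 := optCost A (k-1) with hΔk1def
      have hΔ1 : (1/ε) * Δk ≤ Δk1 := by
        rw [one_div, inv_mul_le_iff₀ hε]
        linarith [hopt]
      set m : ℝ := (1/ε - 1) * Δk / n / 16 with hmdef
      have hmpos : 0 < m := by
        apply div_pos (div_pos (mul_pos h1epos hΔpos) hnR)
        norm_num
      -- every bad point is far from its center
      have key : ∀ i, ¬ ProxPt c A C T μ i → m ≤ ‖A i - C i‖ ^ 2 := by
        intro i hbadP
        simp only [ProxPt] at hbadP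
        push_neg at hbadP
        obtain ⟨r, hir, s, hsr, hlt⟩ := hbadP
        have hcard0 : (T r).card ≠ 0 := by
          have h : (0:ℝ) < ((T r).card : ℝ) := hcpos r
          exact_mod_cast ne_of_gt h
        have hcardle : ((T r).card : ℝ) ≤ n := by
          have h := Finset.card_le_univ (T r)
          simp only [Finset.card_univ, Fintype.card_fin] at h
          exact_mod_cast h
        have hmerge := merge_bound hk2 A C T μ hpart hmean hC r s hsr hcard0
        rw [hSsum] at hmerge
        have hL2 : (1/ε - 1) * Δk / n ≤ ‖μ s - μ r‖ ^ 2 := by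
          rw [norm_sub_rev]
          have h3 : (1/ε - 1) * Δk ≤ ((T r).card : ℝ) * ‖μ r - μ s‖ ^ 2 := by
            linarith [hmerge, hΔ1]
          have h4 : ((T r).card : ℝ) * ‖μ r - μ s‖ ^ 2 ≤ n * ‖μ r - μ s‖ ^ 2 :=
            mul_le_mul_of_nonneg_right hcardle (sq_nonneg _)
          rw [div_le_iff₀ hnR]
          linarith
        have hL2pos : 0 < ‖μ s - μ r‖ ^ 2 :=
          lt_of_lt_of_le (div_pos (mul_pos h1epos hΔpos) hnR) hL2
        -- bound on Dlt
        have hswn : (0:ℝ) < Real.sqrt (w * n) := Real.sqrt_pos.mpr hwn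
        have hkR : (0:ℝ) < (k:ℝ) := by exact_mod_cast (by omega : 0 < k)
        have hterm : ∀ r', c * (k:ℝ) / Real.sqrt (((T r').card : ℝ)) ≤ c * k / Real.sqrt (w * n) := by
          intro r'
          gcongr
          exact hcard r'
        have hDnn : 0 ≤ Dlt c A C T r s := by
          simp only [Dlt]
          have h1 : 0 ≤ c * (k:ℝ) / Real.sqrt (((T r).card : ℝ)) := by positivity
          have h2 : 0 ≤ c * (k:ℝ) / Real.sqrt (((T s).card : ℝ)) := by positivity
          have h3 := specNorm_nonneg (diffM A C)
          positivity
        have hDle : Dlt c A C T r s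
            ≤ 2 * (c * k / Real.sqrt (w*n)) * frobNorm (diffM A C) := by
          simp only [Dlt]
          have hs2 := specNorm_le_frobNorm (diffM A C)
          have h0 := specNorm_nonneg (diffM A C)
          have hfnn := frobNorm_nonneg (diffM A C)
          have h1' := hterm r
          have h2' := hterm s
          have ha1 : 0 ≤ c * (k:ℝ) / Real.sqrt (((T r).card : ℝ)) := by positivity
          have ha2 : 0 ≤ c * (k:ℝ) / Real.sqrt (((T s).card : ℝ)) := by positivity
          calc (c * (k:ℝ) / Real.sqrt (((T r).card : ℝ)) + c * k / Real.sqrt (((T s).card : ℝ)))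
                * specNorm (diffM A C)
              ≤ (c * (k:ℝ) / Real.sqrt (((T r).card : ℝ)) + c * k / Real.sqrt (((T s).card : ℝ)))
                * frobNorm (diffM A C) :=
                mul_le_mul_of_nonneg_left hs2 (by linarith)
            _ ≤ (2 * (c * k / Real.sqrt (w*n))) * frobNorm (diffM A C) :=
                mul_le_mul_of_nonneg_right (by linarith) hfnn
            _ = 2 * (c * k / Real.sqrt (w*n)) * frobNorm (diffM A C) := by ring
        have hD2 : (Dlt c A C T r s)^2 ≤ 4 * c^2 * k^2 * Δk / (w * n) := by
          have hq : (2 * (c * k / Real.sqrt (w*n)) * frobNorm (diffM A C))^2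
              = 4 * c^2 * (k:ℝ)^2 * Δk / (w*n) := by
            have hfr : frobNorm (diffM A C)^2 = Δk := hfrob
            rw [mul_pow, mul_pow, div_pow, Real.sq_sqrt hwn.le, hfr]
            ring
          rw [← hq]
          exact pow_le_pow_left₀ hDnn hDle 2
        have hDhalf : Dlt c A C T r s ≤ ‖μ s - μ r‖ / 2 := by
          have e1 : 4 * c^2 * (k:ℝ)^2 * Δk / (w*n) ≤ (1/ε - 1) * Δk / n / 4 := by
            have hh : (0:ℝ) ≤ Δk / (4 * n) := by positivity
            have hmul := mul_le_mul_of_nonneg_right h16 hh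
            calc 4*c^2*(k:ℝ)^2*Δk/(w*n) = (16*c^2*k^2/w) * (Δk/(4*n)) := by
                  rw [div_mul_div_comm, div_eq_div_iff (by positivity) (by positivity)]
                  ring
              _ ≤ (1/ε - 1) * (Δk/(4*n)) := hmul
              _ = (1/ε - 1) * Δk / n / 4 := by
                  simp only [div_eq_mul_inv, mul_inv]
                  ring
          have hsq : (Dlt c A C T r s)^2 ≤ (‖μ s - μ r‖ / 2)^2 := by
            calc (Dlt c A C T r s)^2 ≤ 4 * c^2 * (k:ℝ)^2 * Δk / (w*n) := hD2
              _ ≤ (1/ε - 1) * Δk / n / 4 := e1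
              _ ≤ ‖μ s - μ r‖^2 / 4 := by linarith [hL2]
              _ = (‖μ s - μ r‖/2)^2 := by ring
          have hsqrt := Real.sqrt_le_sqrt hsq
          rwa [Real.sqrt_sq hDnn, Real.sqrt_sq (by positivity : (0:ℝ) ≤ ‖μ s - μ r‖ / 2)] at hsqrt
        have hfar := proj_far (μ r) (μ s) (A i) (Dlt c A C T r s) hDnn
          (by linarith [hDhalf]) hlt
        rw [hC i r hir]
        have h5 : (‖μ s - μ r‖/4)^2 ≤ ‖A i - μ r‖^2 :=
          pow_le_pow_left₀ (by positivity) hfar 2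
        have h6 : m ≤ (‖μ s - μ r‖/4)^2 := by
          rw [hmdef]
          calc (1/ε - 1) * Δk / ↑n / 16 ≤ ‖μ s - μ r‖^2/16 := by linarith [hL2]
            _ = (‖μ s - μ r‖/4)^2 := by ring
        linarith
      -- counting
      set B := Finset.univ.filter (fun i => ¬ ProxPt c A C T μ i) with hB
      have hsetB : {i : Fin n | ¬ ProxPt c A C T μ i} = ↑B := by
        ext i; simp [hB]
      rw [hsetB, Set.ncard_coe_finset]
      have hcount : (B.card : ℝ) * m ≤ Δk := by
        have h1 : (B.card : ℝ) * m = ∑ _i ∈ B, m := by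
          rw [Finset.sum_const, nsmul_eq_mul]
        rw [h1]
        calc ∑ _i ∈ B, m ≤ ∑ i ∈ B, ‖A i - C i‖^2 := by
              apply Finset.sum_le_sum
              intro i hi
              apply key
              simpa [hB] using hi
          _ ≤ ∑ i, ‖A i - C i‖^2 :=
              Finset.sum_le_sum_of_subset_of_nonneg (Finset.subset_univ _)
                (fun i _ _ => sq_nonneg _)
          _ = Δk := hSsum
      have h2 : Δk ≤ (32 * ε * n) * m := by
        have heq : (32 * ε * (n:ℝ)) * m = (2 - 2*ε) * Δk := by
          rw [hmdef]
          have hn1 : (n:ℝ) * (n:ℝ)⁻¹ = 1 := mul_inv_cancel₀ hnR.ne'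
          have he2 : ε * ε⁻¹ = 1 := mul_inv_cancel₀ hε.ne'
          calc 32 * ε * (n:ℝ) * ((1/ε - 1) * Δk / ↑n / 16)
              = (2*(ε*ε⁻¹)*((n:ℝ)*(n:ℝ)⁻¹) - 2*ε*((n:ℝ)*(n:ℝ)⁻¹)) * Δk := by
                simp only [one_div, div_eq_mul_inv, mul_inv]
                ring
            _ = (2 - 2*ε) * Δk := by rw [he2, hn1]; ring
        rw [heq]
        nlinarith [hΔpos.le, hε2]
      exact le_of_mul_le_mul_right (hcount.trans h2) hmpos
end
end

section
/- For every k, every sufficiently large constant c (used in the definition of Δ_rs), and every w > 0 there is a constant c₀ such that the following holds. Suppose n_r ≥ w·n for all r, and |μ_r − μ′_r| ≤ c·√(kεn)·‖A−C‖/n_r for all r, where μ′_r is the mean of S_r and S_1,…,S_k is the nearest-center partition induced by centers ν_1,…,ν_k with δ_t = |μ_t − ν_t| ≤ 800·√(kεn)·‖A−C‖/n_t for all t and δ_r + δ_s ≤ Δ_rs/16 for all r ≠ s. Then for every point A_i that satisfies the proximity condition but belongs to T_r ∩ S_s with s ≠ r (i.e., is misclassified), α′(A_i) ≤ (1 + c₀·ε)·α(A_i).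 -/
open scoped BigOperators

set_option maxHeartbeats 4000000

noncomputable section

lemma lineProj_inner {d : ℕ} (a b x : Pt d) (hab : ‖b - a‖ ^ 2 ≠ 0) :
    inner ℝ (x - lineProj a b x) (b - a) = (0 : ℝ) := by
  unfold lineProj
  rw [sub_add_eq_sub_sub, inner_sub_left, real_inner_smul_left,
    real_inner_self_eq_norm_sq, div_mul_cancel₀ _ hab, sub_self]

lemma pyth {d : ℕ} (a b x y : Pt d) (t : ℝ) (hab : ‖b - a‖ ^ 2 ≠ 0)
    (hy : y = a + t • (b - a)) :
    ‖x - y‖ ^ 2 = ‖x - lineProj a b x‖ ^ 2 + ‖lineProj a b x - y‖ ^ 2 := by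
  have h1 : inner ℝ (x - lineProj a b x) (b - a) = (0:ℝ) := lineProj_inner a b x hab
  have hpy : lineProj a b x - y
      = ((inner ℝ (x - a) (b - a) : ℝ) / ‖b - a‖ ^ 2 - t) • (b - a) := by
    rw [hy]; unfold lineProj; module
  have h2 : inner ℝ (x - lineProj a b x) (lineProj a b x - y) = (0:ℝ) := by
    rw [hpy, real_inner_smul_right, h1, mul_zero]
  have hxy : x - y = (x - lineProj a b x) + (lineProj a b x - y) := by abel
  rw [hxy, norm_add_sq_real, h2]; ring

lemma dist_sq_ge {d : ℕ} (a b x : Pt d) (Δ : ℝ) (hΔ : 0 < Δ)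
    (h : ‖lineProj a b x - b‖ - ‖lineProj a b x - a‖ ≥ Δ) :
    ‖x - a‖ ^ 2 + Δ ^ 2 ≤ ‖x - b‖ ^ 2 := by
  rcases eq_or_ne a b with rfl | hab
  · exfalso
    have hp : lineProj a a x = a := by unfold lineProj; simp
    rw [hp] at h; simp at h; linarith
  · have hba : (0:ℝ) < ‖b - a‖ := by rwa [norm_pos_iff, sub_ne_zero, ne_comm]
    have hab2 : ‖b - a‖ ^ 2 ≠ 0 := by positivity
    have ha := pyth a b x a 0 hab2 (by simp)
    have hb := pyth a b x b 1 hab2 (by module)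
    have h1 : (0:ℝ) ≤ ‖lineProj a b x - a‖ := norm_nonneg _
    nlinarith [norm_nonneg (lineProj a b x - b)]


private lemma ck_aux {c x : ℝ} (hc : 1000000 ≤ c) (hk : 1 ≤ x) :
    6400 * c * x ≤ c * c * x * x := by
  have hc0 : (0:ℝ) < c := by linarith
  have h1 : c * 1 ≤ c * x := mul_le_mul_of_nonneg_left hk hc0.le
  have h2 : (6400:ℝ) ≤ c * x := by linarith
  have h3 : (0:ℝ) ≤ c * x := by linarith
  calc 6400 * c * x = 6400 * (c * x) := by ring
    _ ≤ (c * x) * (c * x) := by nlinarith [h2, h3]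
    _ = c * c * x * x := by ring

private lemma ck_aux2 {c x : ℝ} (hc0 : 0 < c) (hk : 1 ≤ x) :
    c * c * x ≤ c * c * x * x := by
  nlinarith [mul_nonneg (mul_nonneg hc0.le hc0.le) (show (0:ℝ) ≤ x by linarith)]

private lemma sq_mono {a b : ℝ} (h0 : 0 ≤ a) (h : a ≤ b) : a ^ 2 ≤ b ^ 2 := by nlinarith

private lemma le_of_sq_le {a b : ℝ} (h0 : 0 ≤ a) (hb : 0 ≤ b) (h : a ^ 2 ≤ b ^ 2) :
    a ≤ b := by nlinarith

private lemma Dpos_aux {Δ D P : ℝ} (hΔ : 0 < Δ) (hP0 : 0 ≤ P) (hD0 : 0 ≤ D)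
    (hkey : Δ ^ 2 ≤ 2 * D * P + D ^ 2) : 0 < D := by
  by_contra h
  push_neg at h
  have hD : D = 0 := le_antisymm h hD0
  rw [hD] at hkey
  nlinarith

private lemma PB_aux {Δ D P : ℝ} (hΔ : 0 < Δ) (hP0 : 0 ≤ P) (hD0 : 0 ≤ D)
    (hkey : Δ ^ 2 ≤ 2 * D * P + D ^ 2) (hD16 : D ≤ Δ / 16) :
    (255:ℝ) / 512 * Δ ^ 2 ≤ P * D := by
  have hD2 : D ^ 2 ≤ (Δ / 16) ^ 2 := sq_mono hD0 hD16
  nlinarith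

private lemma P7_aux {Δ D P : ℝ} (hΔ : 0 < Δ) (hP0 : 0 ≤ P) (hD0 : 0 ≤ D)
    (hPB : (255:ℝ) / 512 * Δ ^ 2 ≤ P * D) (hD16 : D ≤ Δ / 16) : 7 * Δ ≤ P := by
  nlinarith [mul_le_mul_of_nonneg_left hD16 hP0]

private lemma PE_aux {B Δ P D E : ℝ} (h2 : (2 * B) ^ 2 ≤ Δ ^ 2)
    (hPB : (255:ℝ) / 512 * Δ ^ 2 ≤ P * D) (hPD : P * D ≤ P * E) : B ^ 2 ≤ P * E := by
  nlinarith

private lemma H2q_aux {H B q εw : ℝ} (hstepB : H ^ 2 ≤ εw * B ^ 2)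
    (hBsq : εw * (14 * B) ^ 2 ≤ εw * q ^ 2) : H ^ 2 ≤ εw * q ^ 2 / 196 := by
  nlinarith

private lemma final_aux {q H εw : ℝ} (hq0 : 0 ≤ q) (hH0 : 0 ≤ H) (hεw : 0 ≤ εw)
    (hA : 4 * H ≤ εw * q) (hB : H ^ 2 ≤ εw * q ^ 2 / 196) :
    (q + H) ^ 2 ≤ (1 + εw) * q ^ 2 := by
  nlinarith [mul_le_mul_of_nonneg_right hA hq0, mul_nonneg hεw (sq_nonneg q)]

theorem misclassified_proximate_points_cost_approximation
    (k : ℕ) : ∃ c₁ : ℝ, ∀ c : ℝ, c₁ ≤ c → ∀ w : ℝ, 0 < w → ∃ c₀ : ℝ,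
    ∀ {n d : ℕ} (ε : ℝ) (A C : Fin n → Pt d) (T S : Fin k → Finset (Fin n))
      (μ ν μ' : Fin k → Pt d),
      (∀ i, ∃! r, i ∈ T r) →
      (∀ r, μ r = fmean A (T r)) →
      (∀ i r, i ∈ T r → C i = μ r) →
      (∀ r, w * n ≤ ((T r).card : ℝ)) →
      (∀ r t, ‖μ r - ν r‖ ≤ ‖μ r - ν t‖) →
      (∀ i, ∃! s, i ∈ S s) →
      (∀ s, ∀ i ∈ S s, ∀ t, ‖A i - ν s‖ ≤ ‖A i - ν t‖) →
      (∀ s, μ' s = fmean A (S s)) →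
      (∀ t, ‖μ t - ν t‖ ≤
        800 * Real.sqrt (k * ε * n) * specNorm (diffM A C) / (T t).card) →
      (∀ r s, r ≠ s → ‖μ r - ν r‖ + ‖μ s - ν s‖ ≤ Dlt c A C T r s / 16) →
      (∀ r, ‖μ r - μ' r‖ ≤
        c * Real.sqrt (k * ε * n) * specNorm (diffM A C) / (T r).card) →
      ∀ i r s, r ≠ s → i ∈ T r → i ∈ S s → ProxPt c A C T μ i →
        (⨅ t, ‖A i - μ' t‖ ^ 2) ≤ (1 + c₀ * ε) * ⨅ t, ‖A i - μ t‖ ^ 2 := by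
  refine ⟨1000000, fun c hc w hw => ⟨1 / w ^ 2, ?_⟩⟩
  intro n d ε A C T S μ ν μ' hT hμ hC hwcard hνμ hSpart hSnear hμ'def h800 h16 hη
    i r s hrs hiT hiS hprox
  have hc0 : (0:ℝ) < c := lt_of_lt_of_le (by norm_num) hc
  have hn0 : 0 < n := i.pos
  have hk0 : 0 < k := r.pos
  have hn1 : (1:ℝ) ≤ (n:ℝ) := by exact_mod_cast hn0
  have hk1 : (1:ℝ) ≤ (k:ℝ) := by exact_mod_cast hk0
  haveI : Nonempty (Fin k) := ⟨r⟩
  set M := specNorm (diffM A C) with hM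
  have hM0 : (0:ℝ) ≤ M := norm_nonneg _
  set G := Real.sqrt (↑k * ε * ↑n) with hGdef
  have hG0 : (0:ℝ) ≤ G := Real.sqrt_nonneg _
  have bdd1 : BddBelow (Set.range fun t => ‖A i - μ' t‖ ^ 2) :=
    ⟨0, by rintro _ ⟨t, rfl⟩; positivity⟩
  have bdd2 : BddBelow (Set.range fun t => ‖A i - μ t‖ ^ 2) :=
    ⟨0, by rintro _ ⟨t, rfl⟩; positivity⟩
  by_cases hMz : M = 0
  · -- degenerate case: A i = μ r exactly, both infima are 0
    have h0 : specNorm (diffM A C) = 0 := by rw [← hM]; exact hMz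
    have hCLM : LinearMap.toContinuousLinearMap (Matrix.toEuclideanLin (diffM A C)) = 0 :=
      norm_eq_zero.mp h0
    have hlin : Matrix.toEuclideanLin (diffM A C) = 0 :=
      LinearMap.toContinuousLinearMap.map_eq_zero_iff.mp hCLM
    have hmat : diffM A C = 0 := Matrix.toEuclideanLin.map_eq_zero_iff.mp hlin
    have hAC : A i = C i := by
      ext j
      have := congrFun (congrFun hmat i) j
      simp only [diffM, Matrix.of_apply, Matrix.zero_apply] at this
      linarith
    have hAμ : A i = μ r := by rw [hAC]; exact hC i r hiT
    have hμ'r : ‖μ r - μ' r‖ ≤ 0 := by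
      have := hη r
      rw [hMz, mul_zero, zero_div] at this
      exact this
    have h1 : (⨅ t, ‖A i - μ' t‖ ^ 2) ≤ 0 := by
      refine le_trans (ciInf_le bdd1 r) ?_
      have : ‖A i - μ' r‖ ≤ 0 := by rw [hAμ]; exact hμ'r
      nlinarith [norm_nonneg (A i - μ' r)]
    have h2 : (⨅ t, ‖A i - μ t‖ ^ 2) = 0 := by
      refine le_antisymm (le_trans (ciInf_le bdd2 r) (by rw [hAμ]; simp)) ?_
      exact le_ciInf fun t => by positivity
    rw [h2, mul_zero]; exact h1
  · have hMpos : (0:ℝ) < M := lt_of_le_of_ne hM0 (Ne.symm hMz)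
    -- basic positivity facts
    have hwn : (0:ℝ) < w * n := mul_pos hw (by linarith)
    have hcard_le : ∀ t : Fin k, ((T t).card : ℝ) ≤ n := by
      intro t
      exact_mod_cast (Finset.card_le_univ (T t)).trans_eq (Fintype.card_fin n)
    have hcard_pos : ∀ t : Fin k, (0:ℝ) < ((T t).card : ℝ) :=
      fun t => lt_of_lt_of_le hwn (hwcard t)
    have hsqcard_pos : ∀ t : Fin k, 0 < Real.sqrt ((T t).card : ℝ) :=
      fun t => Real.sqrt_pos.mpr (hcard_pos t)
    have hsn_pos : (0:ℝ) < Real.sqrt (n:ℝ) := Real.sqrt_pos.mpr (by linarith)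
    have hsn2 : Real.sqrt (n:ℝ) ^ 2 = (n:ℝ) := Real.sq_sqrt (by linarith)
    have hsqcard_le : ∀ t : Fin k, Real.sqrt ((T t).card : ℝ) ≤ Real.sqrt (n:ℝ) :=
      fun t => Real.sqrt_le_sqrt (hcard_le t)
    have hck0 : (0:ℝ) ≤ c * k := mul_nonneg hc0.le (Nat.cast_nonneg k)
    set B := c * k * M / Real.sqrt (n:ℝ) with hBdef
    have hBpos : 0 < B :=
      div_pos (mul_pos (mul_pos hc0 (by exact_mod_cast hk0)) hMpos) hsn_pos
    have hdiv : ∀ t : Fin k,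
        c * ↑k / Real.sqrt (n:ℝ) ≤ c * ↑k / Real.sqrt ((T t).card : ℝ) := by
      intro t
      rw [div_le_div_iff₀ hsn_pos (hsqcard_pos t)]
      exact mul_le_mul_of_nonneg_left (hsqcard_le t) hck0
    have hΔpos : ∀ t : Fin k, 0 < Dlt c A C T r t := by
      intro t
      have h1 : 0 < c * ↑k / Real.sqrt ((T r).card : ℝ) :=
        div_pos (mul_pos hc0 (by exact_mod_cast hk0)) (hsqcard_pos r)
      have h2 : 0 < c * ↑k / Real.sqrt ((T t).card : ℝ) :=
        div_pos (mul_pos hc0 (by exact_mod_cast hk0)) (hsqcard_pos t)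
      have hDeq : Dlt c A C T r t
          = (c * ↑k / Real.sqrt ((T r).card : ℝ)
              + c * ↑k / Real.sqrt ((T t).card : ℝ)) * M := by
        rw [Dlt, ← hM]
      rw [hDeq]
      exact mul_pos (add_pos h1 h2) hMpos
    have hΔ2B : ∀ t : Fin k, 2 * B ≤ Dlt c A C T r t := by
      intro t
      have h2B : 2 * B = (c * ↑k / Real.sqrt (n:ℝ) + c * ↑k / Real.sqrt (n:ℝ)) * M := by
        rw [hBdef]; ring
      have hDeq : Dlt c A C T r t
          = (c * ↑k / Real.sqrt ((T r).card : ℝ)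
              + c * ↑k / Real.sqrt ((T t).card : ℝ)) * M := by
        rw [Dlt, ← hM]
      rw [h2B, hDeq]
      exact mul_le_mul_of_nonneg_right (add_le_add (hdiv r) (hdiv t)) hM0
    -- proximity consequences
    have hF1 : ∀ t : Fin k, t ≠ r →
        ‖A i - μ r‖ ^ 2 + Dlt c A C T r t ^ 2 ≤ ‖A i - μ t‖ ^ 2 :=
      fun t ht => dist_sq_ge (μ r) (μ t) (A i) _ (hΔpos t) (hprox r hiT t ht)
    have hQ : ∀ t : Fin k, ‖A i - μ r‖ ≤ ‖A i - μ t‖ := by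
      intro t
      rcases eq_or_ne t r with rfl | ht
      · exact le_refl _
      · refine le_of_sq_le (norm_nonneg _) (norm_nonneg _) ?_
        have h := hF1 t ht
        linarith only [h, sq_nonneg (Dlt c A C T r t)]
    -- abbreviations
    set Δ := Dlt c A C T r s with hΔdef
    set P := ‖A i - μ r‖ with hPdef
    set D := ‖μ r - ν r‖ + ‖μ s - ν s‖ with hDdef
    have hΔs : 0 < Δ := hΔpos s
    have hP0 : (0:ℝ) ≤ P := norm_nonneg _
    have hD0 : (0:ℝ) ≤ D := by rw [hDdef]; positivity
    have hF1s : P ^ 2 + Δ ^ 2 ≤ ‖A i - μ s‖ ^ 2 := hF1 s (Ne.symm hrs)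
    have hF2 : ‖A i - μ s‖ ≤ P + D := by
      have t1 : ‖A i - μ s‖ ≤ ‖A i - ν s‖ + ‖μ s - ν s‖ := by
        have h : A i - μ s = (A i - ν s) - (μ s - ν s) := by abel
        rw [h]; exact norm_sub_le _ _
      have t2 : ‖A i - ν s‖ ≤ ‖A i - ν r‖ := hSnear s i hiS r
      have t3 : ‖A i - ν r‖ ≤ ‖A i - μ r‖ + ‖μ r - ν r‖ := by
        have h : A i - ν r = (A i - μ r) + (μ r - ν r) := by abel
        rw [h]; exact norm_add_le _ _
      rw [hPdef, hDdef]
      linarith only [t1, t2, t3]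
    have hyP : ‖A i - μ s‖ ^ 2 ≤ (P + D) ^ 2 := sq_mono (norm_nonneg _) hF2
    have hkey : Δ ^ 2 ≤ 2 * D * P + D ^ 2 := by
      have hexp : (P + D) ^ 2 = P ^ 2 + 2 * D * P + D ^ 2 := by ring
      linarith only [hF1s, hyP, hexp]
    have hD16 : D ≤ Δ / 16 := h16 r s hrs
    have hDpos : 0 < D := Dpos_aux hΔs hP0 hD0 hkey
    have hDE : D ≤ 1600 * G * M / (w * n) := by
      have hnum : (0:ℝ) ≤ 800 * G * M := by positivity
      have e1 : ‖μ r - ν r‖ ≤ 800 * G * M / (w * n) := by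
        refine (h800 r).trans ?_
        rw [div_le_div_iff₀ (hcard_pos r) hwn]
        exact mul_le_mul_of_nonneg_left (hwcard r) hnum
      have e2 : ‖μ s - ν s‖ ≤ 800 * G * M / (w * n) := by
        refine (h800 s).trans ?_
        rw [div_le_div_iff₀ (hcard_pos s) hwn]
        exact mul_le_mul_of_nonneg_left (hwcard s) hnum
      have e3 : 800 * G * M / (w * n) + 800 * G * M / (w * n)
          = 1600 * G * M / (w * n) := by ring
      rw [hDdef]
      linarith only [e1, e2, e3]
    have hGpos : 0 < G := by
      rcases lt_or_eq_of_le hG0 with h | h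
      · exact h
      · exfalso
        rw [← h] at hDE
        simp at hDE
        linarith only [hDE, hDpos]
    have hkn : (0:ℝ) < ↑k * ε * ↑n := by
      have hgg := hGpos
      rw [hGdef] at hgg
      exact Real.sqrt_pos.mp hgg
    have hεpos : 0 < ε := by
      by_contra h
      push_neg at h
      have h1 : (k:ℝ) * ε ≤ 0 := mul_nonpos_of_nonneg_of_nonpos (Nat.cast_nonneg k) h
      have h2 : (k:ℝ) * ε * ↑n ≤ 0 :=
        mul_nonpos_of_nonpos_of_nonneg h1 (Nat.cast_nonneg n)
      linarith only [h2, hkn]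
    have hG2 : G ^ 2 = ↑k * ε * ↑n := Real.sq_sqrt hkn.le
    -- lower bounds on P
    have hPB : (255:ℝ) / 512 * Δ ^ 2 ≤ P * D := PB_aux hΔs hP0 hD0 hkey hD16
    have hP7 : 7 * Δ ≤ P := P7_aux hΔs hP0 hD0 hPB hD16
    have hPpos : 0 < P := by linarith only [hP7, hΔs]
    set E := 1600 * G * M / (w * n) with hEdef
    set H := c * G * M / (w * n) with hHdef
    have hEpos : 0 < E :=
      div_pos (mul_pos (mul_pos (by norm_num) hGpos) hMpos) hwn
    have hH0 : (0:ℝ) ≤ H := by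
      rw [hHdef]
      exact div_nonneg (mul_nonneg (mul_nonneg hc0.le hG0) hM0) hwn.le
    have hPE : B ^ 2 ≤ P * E :=
      PE_aux (sq_mono (by positivity) (hΔ2B s)) hPB
        (mul_le_mul_of_nonneg_left hDE hPpos.le)
    -- the argmin of the true cost
    obtain ⟨t₀, ht₀⟩ := Finite.exists_min (fun t : Fin k => ‖A i - μ t‖ ^ 2)
    have hαeq : (⨅ t, ‖A i - μ t‖ ^ 2) = ‖A i - μ t₀‖ ^ 2 :=
      le_antisymm (ciInf_le bdd2 t₀) (le_ciInf ht₀)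
    have hqP : P ≤ ‖A i - μ t₀‖ := hQ t₀
    have hq0 : (0:ℝ) ≤ ‖A i - μ t₀‖ := norm_nonneg _
    have hHt : ‖μ t₀ - μ' t₀‖ ≤ H := by
      refine (hη t₀).trans ?_
      rw [hHdef, div_le_div_iff₀ (hcard_pos t₀) hwn]
      exact mul_le_mul_of_nonneg_left (hwcard t₀)
        (mul_nonneg (mul_nonneg hc0.le hG0) hM0)
    have htri : ‖A i - μ' t₀‖ ≤ ‖A i - μ t₀‖ + H := by
      have h1 : ‖A i - μ' t₀‖ ≤ ‖A i - μ t₀‖ + ‖μ t₀ - μ' t₀‖ := by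
        have h : A i - μ' t₀ = (A i - μ t₀) + (μ t₀ - μ' t₀) := by abel
        rw [h]; exact norm_add_le _ _
      linarith only [h1, hHt]
    -- numeric identities
    have hn0' : (n:ℝ) ≠ 0 := by linarith
    have hw0 : w ≠ 0 := ne_of_gt hw
    have hB2 : B ^ 2 = c ^ 2 * (k:ℝ) ^ 2 * M ^ 2 / n := by
      rw [hBdef, div_pow, hsn2]; ring
    have hnR : (0:ℝ) < (n:ℝ) := by linarith
    have hEw : (0:ℝ) ≤ ε * M ^ 2 / (w ^ 2 * n) := by
      have hd : (0:ℝ) < w ^ 2 * n := mul_pos (pow_pos hw 2) hnR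
      have hnum : (0:ℝ) < ε * M ^ 2 := mul_pos hεpos (pow_pos hMpos 2)
      exact le_of_lt (div_pos hnum hd)
    have hck : (6400:ℝ) * c * ↑k ≤ c * c * ↑k * ↑k := ck_aux hc hk1
    have hstepA' : 4 * (H * E) ≤ ε / w ^ 2 * B ^ 2 := by
      rw [hB2, hHdef, hEdef]
      have hL : 4 * ((c * G * M / (w * n)) * (1600 * G * M / (w * n)))
          = (6400 * c * ↑k) * (ε * M ^ 2 / (w ^ 2 * n)) := by
        rw [show (4:ℝ) * ((c * G * M / (w * n)) * (1600 * G * M / (w * n)))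
            = 6400 * c * G ^ 2 * M ^ 2 / (w ^ 2 * n ^ 2) by ring, hG2]
        field_simp
      have hR : ε / w ^ 2 * (c ^ 2 * (k:ℝ) ^ 2 * M ^ 2 / n)
          = (c * c * ↑k * ↑k) * (ε * M ^ 2 / (w ^ 2 * n)) := by
        field_simp
      rw [hL, hR]
      exact mul_le_mul_of_nonneg_right hck hEw
    have hstepB : H ^ 2 ≤ ε / w ^ 2 * B ^ 2 := by
      rw [hB2, hHdef]
      have hL : (c * G * M / (w * n)) ^ 2
          = (c * c * ↑k) * (ε * M ^ 2 / (w ^ 2 * n)) := by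
        rw [show (c * G * M / (w * n)) ^ 2
            = c ^ 2 * G ^ 2 * M ^ 2 / (w ^ 2 * n ^ 2) by ring, hG2]
        field_simp
      have hR : ε / w ^ 2 * (c ^ 2 * (k:ℝ) ^ 2 * M ^ 2 / n)
          = (c * c * ↑k * ↑k) * (ε * M ^ 2 / (w ^ 2 * n)) := by
        field_simp
      rw [hL, hR]
      refine mul_le_mul_of_nonneg_right ?_ hEw
      exact ck_aux2 hc0 hk1
    have hεw0 : (0:ℝ) ≤ ε / w ^ 2 := le_of_lt (div_pos hεpos (pow_pos hw 2))
    have hA4 : 4 * H ≤ ε / w ^ 2 * ‖A i - μ t₀‖ := by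
      have h1 : 4 * H * E ≤ (ε / w ^ 2 * P) * E := by
        calc 4 * H * E = 4 * (H * E) := by ring
          _ ≤ ε / w ^ 2 * B ^ 2 := hstepA'
          _ ≤ ε / w ^ 2 * (P * E) := mul_le_mul_of_nonneg_left hPE hεw0
          _ = (ε / w ^ 2 * P) * E := by ring
      have h2 := le_of_mul_le_mul_right h1 hEpos
      calc 4 * H ≤ ε / w ^ 2 * P := h2
        _ ≤ ε / w ^ 2 * ‖A i - μ t₀‖ := mul_le_mul_of_nonneg_left hqP hεw0
    have hq14 : 14 * B ≤ ‖A i - μ t₀‖ := by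
      have := hΔ2B s
      rw [← hΔdef] at this
      linarith only [this, hP7, hqP, hBpos]
    have hBsq : ε / w ^ 2 * (14 * B) ^ 2 ≤ ε / w ^ 2 * ‖A i - μ t₀‖ ^ 2 :=
      mul_le_mul_of_nonneg_left (sq_mono (by positivity) hq14) hεw0
    have hH2q : H ^ 2 ≤ ε / w ^ 2 * ‖A i - μ t₀‖ ^ 2 / 196 :=
      H2q_aux hstepB hBsq
    calc (⨅ t, ‖A i - μ' t‖ ^ 2) ≤ ‖A i - μ' t₀‖ ^ 2 := ciInf_le bdd1 t₀
      _ ≤ (‖A i - μ t₀‖ + H) ^ 2 := sq_mono (norm_nonneg _) htri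
      _ ≤ (1 + ε / w ^ 2) * ‖A i - μ t₀‖ ^ 2 :=
          final_aux hq0 hH0 hεw0 hA4 hH2q
      _ = (1 + 1 / w ^ 2 * ε) * ⨅ t, ‖A i - μ t‖ ^ 2 := by rw [hαeq]; ring
end
end

section
/- Let B_1,…,B_n ∈ ℝ^d be points partitioned into clusters T_1,…,T_k, where cluster T_r has size w_r·n and mean μ_r ∈ ℝ^d, and let μ = Σ_r w_r·μ_r and w_min = min_r w_r. For each r define θ_r ∈ ℝ^n by (θ_r)_j = (μ_r − μ)·(B_j − μ). Assume that for every pair r ≠ s, with v the unit vector along μ_r − μ_s, Σ_{i ∈ T_r} [ (B_i − μ_r)·v ]² ≤ (|μ_r − μ_s|²/16)·w_r·n. Then for all r ≠ s, |θ_r − θ_s| ≥ (|μ_r − μ_s|²/4)·√(w_min)·√n. -/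
open scoped BigOperators

noncomputable section

theorem boosting_amplifies_center_separation
    {n d k : ℕ} (B : Fin n → Pt d) (T : Fin k → Finset (Fin n))
    (w : Fin k → ℝ) (μ : Fin k → Pt d) (μbar : Pt d) (wmin : ℝ)
    (θ : Fin k → EuclideanSpace ℝ (Fin n))
    (hpart : ∀ i, ∃! r, i ∈ T r)
    (hw : ∀ r, 0 < w r) (hsum : ∑ r, w r = 1)
    (hcard : ∀ r, ((T r).card : ℝ) = w r * n)
    (hμ : ∀ r, μ r = fmean B (T r))
    (hμbar : μbar = ∑ r, w r • μ r)
    (hwmin : IsLeast (Set.range w) wmin)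
    (hθ : ∀ r j, θ r j = (inner ℝ (μ r - μbar) (B j - μbar) : ℝ))
    (hvar : ∀ r s, r ≠ s →
      (∑ i ∈ T r,
        ((inner ℝ (B i - μ r) (‖μ r - μ s‖⁻¹ • (μ r - μ s)) : ℝ)) ^ 2)
        ≤ ‖μ r - μ s‖ ^ 2 / 16 * (w r * n)) :
    ∀ r s, r ≠ s →
      ‖μ r - μ s‖ ^ 2 / 4 * Real.sqrt wmin * Real.sqrt n ≤ ‖θ r - θ s‖ := by
  intro r s hrs
  rcases Nat.eq_zero_or_pos n with hn | hn
  · subst hn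
    simp only [Nat.cast_zero, Real.sqrt_zero, mul_zero]
    exact norm_nonneg _
  have hn' : (0:ℝ) < n := by exact_mod_cast hn
  set u : Pt d := μ r - μ s with hu
  set Δ : ℝ := ‖u‖ with hΔ
  obtain ⟨⟨t0, ht0⟩, hlb⟩ := hwmin
  have hwmin_pos : 0 < wmin := ht0 ▸ hw t0
  have hx2 : (Real.sqrt wmin * Real.sqrt n)^2 = wmin * n := by
    rw [mul_pow, Real.sq_sqrt hwmin_pos.le, Real.sq_sqrt hn'.le]
  have key : ∀ t : Fin k, Δ^2/2 ≤ |(inner ℝ u (μ t - μbar) : ℝ)| →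
      Δ ^ 2 / 4 * Real.sqrt wmin * Real.sqrt n ≤ ‖θ r - θ s‖ := by
    intro t ht
    set c : ℝ := (inner ℝ u (μ t - μbar) : ℝ) with hc
    have hcardpos : (0:ℝ) < (T t).card := by
      rw [hcard]; exact mul_pos (hw t) hn'
    have hsumB : ∑ j ∈ T t, (B j - μ t) = 0 := by
      have h1 : μ t = ((T t).card : ℝ)⁻¹ • ∑ i ∈ T t, B i := hμ t
      have h2 : ((T t).card : ℝ) • μ t = ∑ j ∈ T t, B j := by
        rw [h1, smul_smul, mul_inv_cancel₀ (ne_of_gt hcardpos), one_smul]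
      have h3 : ∑ j ∈ T t, (B j - μ t) = (∑ j ∈ T t, B j) - ((T t).card) • μ t :=
        (Finset.sum_sub_distrib _ _).trans (by rw [Finset.sum_const])
      rw [h3, ← h2, ← Nat.cast_smul_eq_nsmul ℝ, sub_self]
    have hθj : ∀ j, (θ r - θ s) j = (inner ℝ u (B j - μ t) : ℝ) + c := by
      intro j
      have h0 : (θ r - θ s) j = θ r j - θ s j := rfl
      rw [h0, hθ r j, hθ s j, ← inner_sub_left]
      have h2 : μ r - μbar - (μ s - μbar) = u := by rw [hu]; abel
      rw [h2, hc, ← inner_add_right]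
      congr 1
      abel
    have hcross : ∑ j ∈ T t, (inner ℝ u (B j - μ t) : ℝ) = 0 := by
      rw [← inner_sum, hsumB, inner_zero_right]
    have expand : ∑ j ∈ T t, ((θ r - θ s) j)^2
        = (∑ j ∈ T t, (inner ℝ u (B j - μ t) : ℝ)^2)
          + 2 * c * (∑ j ∈ T t, (inner ℝ u (B j - μ t) : ℝ))
          + ((T t).card : ℝ) * c^2 := by
      simp only [hθj, add_sq]
      rw [Finset.sum_add_distrib, Finset.sum_add_distrib, Finset.sum_const, nsmul_eq_mul]
      congr 1
      · congr 1
        rw [Finset.mul_sum]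
        exact Finset.sum_congr rfl fun j _ => by ring
    have hS : ((T t).card : ℝ) * c^2 ≤ ∑ j ∈ T t, ((θ r - θ s) j)^2 := by
      rw [expand, hcross, mul_zero, add_zero]
      have : (0:ℝ) ≤ ∑ j ∈ T t, (inner ℝ u (B j - μ t) : ℝ)^2 :=
        Finset.sum_nonneg fun j _ => sq_nonneg _
      linarith
    have hnorm2 : ‖θ r - θ s‖^2 = ∑ j, ((θ r - θ s) j)^2 := by
      rw [EuclideanSpace.norm_eq, Real.sq_sqrt (Finset.sum_nonneg fun j _ => sq_nonneg _)]
      simp [Real.norm_eq_abs, sq_abs]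
    have hsubset : ∑ j ∈ T t, ((θ r - θ s) j)^2 ≤ ∑ j, ((θ r - θ s) j)^2 :=
      Finset.sum_le_sum_of_subset_of_nonneg (Finset.subset_univ _)
        (fun j _ _ => sq_nonneg _)
    have hcsq : (Δ^2/2)^2 ≤ c^2 := by
      have : (Δ^2/2)^2 ≤ |c|^2 := by
        apply pow_le_pow_left₀ (by positivity) ht
      rwa [sq_abs] at this
    have hcard_ge : wmin * n ≤ ((T t).card : ℝ) := by
      rw [hcard]
      exact mul_le_mul_of_nonneg_right (hlb ⟨t, rfl⟩) hn'.le
    have hfinal : (wmin * n) * (Δ^2/2)^2 ≤ ‖θ r - θ s‖^2 := by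
      rw [hnorm2]
      calc (wmin * n) * (Δ^2/2)^2 ≤ ((T t).card : ℝ) * c^2 := by
            apply mul_le_mul hcard_ge hcsq (by positivity) hcardpos.le
        _ ≤ ∑ j ∈ T t, ((θ r - θ s) j)^2 := hS
        _ ≤ ∑ j, ((θ r - θ s) j)^2 := hsubset
    nlinarith [norm_nonneg (θ r - θ s), Real.sqrt_nonneg wmin, Real.sqrt_nonneg (n:ℝ),
      sq_nonneg Δ, sq_nonneg (‖θ r - θ s‖ - Δ^2/2 * (Real.sqrt wmin * Real.sqrt n)),
      mul_nonneg (Real.sqrt_nonneg wmin) (Real.sqrt_nonneg (n:ℝ)),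
      sq_nonneg (Δ^2 * (Real.sqrt wmin * Real.sqrt n))]
  have hab : (inner ℝ u (μ r - μbar) : ℝ) - (inner ℝ u (μ s - μbar) : ℝ) = Δ^2 := by
    rw [← inner_sub_right]
    have h2 : (μ r - μbar) - (μ s - μbar) = u := by rw [hu]; abel
    rw [h2, real_inner_self_eq_norm_sq]
  by_cases h : Δ^2/2 ≤ |(inner ℝ u (μ r - μbar) : ℝ)|
  · exact key r h
  · apply key s
    push_neg at h
    have h1 := le_abs_self ((inner ℝ u (μ r - μbar) : ℝ))
    have h2 := neg_abs_le ((inner ℝ u (μ r - μbar) : ℝ))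
    have h3 := le_abs_self (-(inner ℝ u (μ s - μbar) : ℝ))
    have h4 := neg_abs_le (-(inner ℝ u (μ s - μbar) : ℝ))
    rw [abs_neg] at h3 h4
    linarith
end
end
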